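/- M_n is the closure (within {c : |c| > 1}) of the set M̂_n of zeros of polynomials with coefficients in D_n: M_n = clos(M̂_n) ∩ {c : |c| > 1}, where M̂_n := { c ∈ ℂ : |c| > 1 and ∃ m ≥ 1, a_1,...,a_m ∈ D_n with 1 + Σ_{k=1}^m a_k c^{-k} = 0 }. -/

import Mathlib

/-- `A n = {-n+1, -n+3, ..., n-1} ⊂ ℂ`. -/
def Acoef (n : ℕ) : Set ℂ := {x | ∃ k : ℕ, k < n ∧ x = (n : ℂ) - 1 - 2 * k}

/-- The collinear fractal `E(c,n)`. -/
def E (c : ℂ) (n : ℕ) : Set ℂ :=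
  {z | ∃ a : ℕ → ℂ, (∀ k, a k ∈ Acoef n) ∧ HasSum (fun k => a k / c ^ k) z}

/-- `D n = {1-n, ..., -1, 0, 1, ..., n-1} ⊂ ℂ`. -/
def Dcoef (n : ℕ) : Set ℂ := {x | ∃ j : ℤ, |j| ≤ (n : ℤ) - 1 ∧ x = j}

/-- The connectedness locus `M n` (power-series characterization). -/
def M (n : ℕ) : Set ℂ :=
  {c | 1 < ‖c‖ ∧
    ∃ a : ℕ → ℂ, (∀ k, a k ∈ Dcoef n) ∧ HasSum (fun k => a k / c ^ (k + 1)) (-1)}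

/-- The set of polynomial zeros `M̂ n`. -/
def Mhat (n : ℕ) : Set ℂ :=
  {c | 1 < ‖c‖ ∧
    ∃ m : ℕ, 1 ≤ m ∧ ∃ a : ℕ → ℂ, (∀ k < m, a k ∈ Dcoef n) ∧
      1 + ∑ k ∈ Finset.range m, a k / c ^ (k + 1) = 0}

open Filter Metric Set Topology

lemma Dcoef_norm {n : ℕ} {x : ℂ} (hx : x ∈ Dcoef n) : ‖x‖ ≤ (n : ℝ) - 1 := by
  obtain ⟨j, hj, rfl⟩ := hx
  rw [Complex.norm_intCast]
  exact_mod_cast hj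

lemma Dcoef_finite (n : ℕ) : (Dcoef n).Finite := by
  apply Set.Finite.subset ((Set.finite_Icc (-(n:ℤ)+1) ((n:ℤ)-1)).image (fun j : ℤ => (j : ℂ)))
  rintro x ⟨j, hj, rfl⟩
  refine ⟨j, ?_, rfl⟩
  rw [Set.mem_Icc]
  rw [abs_le] at hj
  omega

lemma zero_mem_Dcoef {n : ℕ} (hn : 1 ≤ n) : (0 : ℂ) ∈ Dcoef n :=
  ⟨0, by simp; omega, by simp⟩

lemma tuo_comp {ι κ : Type*} {F : ι → ℂ → ℂ} {f : ℂ → ℂ} {p : Filter ι} {q : Filter κ}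
    {g : κ → ι} {s : Set ℂ} (h : TendstoUniformlyOn F f p s) (hg : Tendsto g q p) :
    TendstoUniformlyOn (fun k => F (g k)) f q s :=
  fun u hu => hg.eventually (h u hu)

lemma forward_approx (n : ℕ) (hn : 2 ≤ n) {c : ℂ} (hc : 1 < ‖c‖)
    {a : ℕ → ℂ} (ha : ∀ k, a k ∈ Dcoef n)
    (hsum : HasSum (fun k => a k / c ^ (k + 1)) (-1)) :
    ∀ ε > 0, ∃ c' ∈ Mhat n, dist c c' < ε := by
  have hc' : 1 < ‖c‖ := by exact hc
  have hc0 : c ≠ 0 := by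
    intro h; rw [h, norm_zero] at hc'; linarith
  set B : ℝ := (n : ℝ) - 1 with hBdef
  have hB0 : 0 < B := by
    have : (2 : ℝ) ≤ (n : ℝ) := by exact_mod_cast hn
    simp only [hBdef]; linarith
  have hak : ∀ k, ‖a k‖ ≤ B := fun k => Dcoef_norm (ha k)
  set z0 : ℂ := c⁻¹ with hz0def
  have hz0pos : 0 < ‖z0‖ := by
    rw [hz0def, norm_inv]; positivity
  have hz0lt : ‖z0‖ < 1 := by
    rw [hz0def, norm_inv]; exact inv_lt_one_of_one_lt₀ hc'
  set f0 : ℂ → ℂ := fun z => ∑' k, a k * z ^ (k + 1) with hf0def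
  set P : ℕ → ℂ → ℂ := fun m z => ∑ k ∈ Finset.range m, a k * z ^ (k + 1) with hPdef
  -- uniform convergence on closed balls of radius < 1
  have key : ∀ ρ : ℝ, 0 ≤ ρ → ρ < 1 →
      TendstoUniformlyOn P f0 atTop (Metric.closedBall 0 ρ) := by
    intro ρ hρ0 hρ1
    have hu : Summable (fun k : ℕ => B * ρ ^ (k + 1)) := by
      apply Summable.congr (((summable_geometric_of_lt_one hρ0 hρ1).mul_left (B * ρ)))
      intro k; rw [pow_succ]; ring
    have := tendstoUniformlyOn_tsum hu
      (f := fun k (z : ℂ) => a k * z ^ (k + 1)) (s := Metric.closedBall 0 ρ) ?_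
    · exact tuo_comp this tendsto_finset_range
    · intro k z hz
      rw [norm_mul, norm_pow]
      have hz' : ‖z‖ ≤ ρ := by simpa using hz
      exact mul_le_mul (hak k) (pow_le_pow_left₀ (norm_nonneg z) hz' _)
        (by positivity) hB0.le
  have hPdiff : ∀ m, DifferentiableOn ℂ (P m) (Metric.ball (0:ℂ) 1) := by
    intro m
    apply DifferentiableOn.fun_sum
    intro k _
    exact ((differentiable_pow (k+1)).const_mul (a k)).differentiableOn
  have htlu : TendstoLocallyUniformlyOn P f0 atTop (Metric.ball (0:ℂ) 1) := by
    rw [tendstoLocallyUniformlyOn_iff_forall_isCompact Metric.isOpen_ball]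
    intro K hK hKc
    rcases K.eq_empty_or_nonempty with h | h
    · exact ((key 0 le_rfl one_pos).mono (by rw [h]; exact Set.empty_subset _))
    · obtain ⟨w, hwK, hwmax⟩ := hKc.exists_isMaxOn h continuous_norm.continuousOn
      have hw1 : ‖w‖ < 1 := by simpa using hK hwK
      exact (key ‖w‖ (norm_nonneg w) hw1).mono
        (fun z hz => by simpa using hwmax hz)
  have hf0diff : DifferentiableOn ℂ f0 (Metric.ball (0:ℂ) 1) :=
    htlu.differentiableOn (Filter.Eventually.of_forall hPdiff) Metric.isOpen_ball
  set F : ℂ → ℂ := fun z => 1 + f0 z with hFdef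
  have hFdiff : DifferentiableOn ℂ F (Metric.ball (0:ℂ) 1) :=
    (differentiableOn_const 1).add hf0diff
  have hf00 : f0 0 = 0 := by
    have h2 : (fun k : ℕ => a k * (0:ℂ) ^ (k + 1)) = fun _ => (0:ℂ) := by
      funext k; rw [zero_pow (Nat.succ_ne_zero k), mul_zero]
    show (∑' k, a k * (0:ℂ) ^ (k + 1)) = 0
    rw [h2, tsum_zero]
  have hF0 : F 0 = 1 := by
    show 1 + f0 0 = 1
    rw [hf00, add_zero]
  have hz0mem : z0 ∈ Metric.ball (0:ℂ) 1 := by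
    simpa using hz0lt
  have hFz0 : F z0 = 0 := by
    have heq : (fun k => a k * z0 ^ (k + 1)) = fun k => a k / c ^ (k + 1) := by
      funext k; rw [hz0def, inv_pow, ← div_eq_mul_inv]
    have h1 : HasSum (fun k => a k * z0 ^ (k + 1)) (-1) := heq ▸ hsum
    have h2 : f0 z0 = -1 := h1.tsum_eq
    show 1 + f0 z0 = 0
    rw [h2]; ring
  have hAn : AnalyticOnNhd ℂ F (Metric.ball (0:ℂ) 1) :=
    hFdiff.analyticOnNhd Metric.isOpen_ball
  -- isolated zero: find r0 > 0 with F ≠ 0 on punctured ball around z0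
  obtain ⟨r0, hr00, hr0⟩ : ∃ r0 > 0, ∀ z, dist z z0 < r0 → z ≠ z0 → F z ≠ 0 := by
    rcases (hAn z0 hz0mem).eventually_eq_zero_or_eventually_ne_zero with h | h
    · exfalso
      have := hAn.eqOn_zero_of_preconnected_of_eventuallyEq_zero
        (convex_ball (0:ℂ) 1).isPreconnected hz0mem h
      have h0 := this (Metric.mem_ball_self one_pos)
      rw [hF0] at h0; exact one_ne_zero h0
    · rw [eventually_nhdsWithin_iff] at h
      rw [Metric.eventually_nhds_iff] at h
      obtain ⟨r0, hr00, h⟩ := h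
      exact ⟨r0, hr00, fun z hz hzne => h hz hzne⟩
  intro ε hε
  set rr : ℝ := min (r0/2) (min ((1 - ‖z0‖)/2) (min (‖z0‖/2) (ε * ‖z0‖^2/4))) with hrrdef
  have hrr0 : 0 < rr := by
    apply lt_min (by linarith)
    exact lt_min (by linarith) (lt_min (by linarith) (by positivity))
  have hrrr0 : rr < r0 := lt_of_le_of_lt (min_le_left _ _) (by linarith)
  have hrr1 : rr ≤ (1 - ‖z0‖)/2 := le_trans (min_le_right _ _) (min_le_left _ _)
  have hrr2 : rr ≤ ‖z0‖/2 :=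
    le_trans (min_le_right _ _) (le_trans (min_le_right _ _) (min_le_left _ _))
  have hrr3 : rr ≤ ε * ‖z0‖^2/4 :=
    le_trans (min_le_right _ _) (le_trans (min_le_right _ _) (min_le_right _ _))
  set ρ : ℝ := (1 + ‖z0‖)/2 with hρdef
  have hρ0 : 0 ≤ ρ := by positivity
  have hρ1 : ρ < 1 := by rw [hρdef]; linarith
  have hsub : Metric.closedBall z0 rr ⊆ Metric.closedBall (0:ℂ) ρ := by
    intro z hz
    rw [Metric.mem_closedBall] at hz ⊢
    calc dist z 0 ≤ dist z z0 + dist z0 0 := dist_triangle _ _ _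
      _ ≤ rr + ‖z0‖ := by rw [dist_zero_right]; linarith
      _ ≤ ρ := by rw [hρdef]; linarith
  have hsub1 : Metric.closedBall z0 rr ⊆ Metric.ball (0:ℂ) 1 :=
    fun z hz => lt_of_le_of_lt (by simpa using hsub hz) hρ1
  -- minimum of ‖F‖ on the sphere
  have hsphne : (Metric.sphere z0 rr).Nonempty :=
    NormedSpace.sphere_nonempty.mpr hrr0.le
  obtain ⟨w, hwsph, hwmin⟩ := (isCompact_sphere z0 rr).exists_isMinOn hsphne
    ((hFdiff.continuousOn.mono
      (fun z hz => hsub1 (Metric.sphere_subset_closedBall hz))).norm)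
  set δ : ℝ := ‖F w‖ with hδdef
  have hδ0 : 0 < δ := by
    rw [hδdef, norm_pos_iff]
    apply hr0
    · rw [Metric.mem_sphere] at hwsph; rw [hwsph]; exact hrrr0
    · intro h
      rw [Metric.mem_sphere, h, dist_self] at hwsph
      exact hrr0.ne' hwsph.symm
  -- choose m with uniform closeness δ/2
  obtain ⟨m0, hm0⟩ := Filter.eventually_atTop.mp
    ((Metric.tendstoUniformlyOn_iff.mp (key ρ hρ0 hρ1)) (δ/2) (half_pos hδ0))
  set m : ℕ := max m0 1 with hmdef
  set Q : ℂ → ℂ := fun z => 1 + P m z with hQdef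
  have hQF : ∀ z ∈ Metric.closedBall z0 rr, ‖Q z - F z‖ < δ/2 := by
    intro z hz
    have := hm0 m (le_max_left _ _) z (hsub hz)
    rw [dist_eq_norm] at this
    have heq : Q z - F z = -(f0 z - P m z) := by rw [hQdef, hFdef]; ring
    rw [heq, norm_neg]; exact this
  -- Q has a zero in the closed ball (minimum modulus principle)
  have hzero : ∃ z1 ∈ Metric.closedBall z0 rr, Q z1 = 0 := by
    by_contra hno
    push_neg at hno
    have hQd : Differentiable ℂ Q := by
      apply (differentiable_const 1).add
      apply Differentiable.fun_sum
      intro k _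
      exact (differentiable_pow (k+1)).const_mul (a k)
    have hcl : closure (Metric.ball z0 rr) = Metric.closedBall z0 rr :=
      closure_ball z0 hrr0.ne'
    have hfr : frontier (Metric.ball z0 rr) = Metric.sphere z0 rr :=
      frontier_ball z0 hrr0.ne'
    have hdc : DiffContOnCl ℂ (fun z => (Q z)⁻¹) (Metric.ball z0 rr) := by
      constructor
      · exact (hQd.differentiableOn).inv
          (fun z hz => hno z (Metric.ball_subset_closedBall hz))
      · rw [hcl]
        exact (hQd.continuous.continuousOn).inv₀ hno
    have hCb : ∀ z ∈ frontier (Metric.ball z0 rr), ‖(Q z)⁻¹‖ ≤ 2/δ := by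
      rw [hfr]
      intro z hz
      have h1 : δ ≤ ‖F z‖ := hwmin hz
      have h2 : ‖Q z - F z‖ < δ/2 := hQF z (Metric.sphere_subset_closedBall hz)
      have h3 : δ/2 ≤ ‖Q z‖ := by
        have h4 := norm_sub_norm_le (F z) (Q z)
        rw [norm_sub_rev] at h2
        linarith
      rw [norm_inv]
      calc ‖Q z‖⁻¹ ≤ (δ/2)⁻¹ := inv_anti₀ (by positivity) h3
        _ = 2/δ := by rw [inv_div]
    have hz0cl : z0 ∈ closure (Metric.ball z0 rr) := by
      rw [hcl]; exact Metric.mem_closedBall_self hrr0.le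
    have hle := Complex.norm_le_of_forall_mem_frontier_norm_le
      Metric.isBounded_ball hdc hCb hz0cl
    have hQz0ne := hno z0 (Metric.mem_closedBall_self hrr0.le)
    have hpos : 0 < ‖Q z0‖ := norm_pos_iff.mpr hQz0ne
    rw [norm_inv] at hle
    have h5 := inv_anti₀ (by positivity : (0:ℝ) < ‖Q z0‖⁻¹) hle
    rw [inv_inv, inv_div] at h5
    have hQz0 : ‖Q z0‖ < δ/2 := by
      have := hQF z0 (Metric.mem_closedBall_self hrr0.le)
      rwa [hFz0, sub_zero] at this
    linarith
  obtain ⟨z1, hz1mem, hz1zero⟩ := hzero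
  rw [Metric.mem_closedBall] at hz1mem
  have hz1lb : ‖z0‖/2 ≤ ‖z1‖ := by
    have h1 : ‖z0‖ - ‖z1‖ ≤ ‖z0 - z1‖ := norm_sub_norm_le _ _
    have h2 : ‖z0 - z1‖ ≤ rr := by rw [← dist_eq_norm, dist_comm]; exact hz1mem
    linarith
  have hz1pos : 0 < ‖z1‖ := by linarith
  have hz1ne : z1 ≠ 0 := norm_pos_iff.mp hz1pos
  have hz1ub : ‖z1‖ < 1 := by
    have h1 : ‖z1‖ - ‖z0‖ ≤ ‖z1 - z0‖ := norm_sub_norm_le _ _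
    have h2 : ‖z1 - z0‖ ≤ rr := by rw [← dist_eq_norm]; exact hz1mem
    linarith
  refine ⟨z1⁻¹, ⟨?_, m, le_max_right _ _, a, fun k _ => ha k, ?_⟩, ?_⟩
  · rw [norm_inv]
    exact (one_lt_inv₀ hz1pos).mpr hz1ub
  · have : ∀ k, a k / (z1⁻¹) ^ (k + 1) = a k * z1 ^ (k + 1) := by
      intro k; rw [inv_pow, div_inv_eq_mul]
    rw [Finset.sum_congr rfl (fun k _ => this k)]
    exact hz1zero
  · have hcz0 : c = z0⁻¹ := by rw [hz0def, inv_inv]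
    have hz0ne : z0 ≠ 0 := norm_pos_iff.mp hz0pos
    have hkey : z0⁻¹ - z1⁻¹ = (z1 - z0) / (z0 * z1) := inv_sub_inv hz0ne hz1ne
    rw [dist_eq_norm, hcz0, hkey, norm_div, norm_mul]
    have hnum : ‖z1 - z0‖ ≤ rr := by rw [← dist_eq_norm]; exact hz1mem
    have hden : ‖z0‖ * (‖z0‖/2) ≤ ‖z0‖ * ‖z1‖ := by
      apply mul_le_mul_of_nonneg_left hz1lb (norm_nonneg _)
    calc ‖z1 - z0‖ / (‖z0‖ * ‖z1‖) ≤ rr / (‖z0‖ * (‖z0‖/2)) :=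
          div_le_div₀ hrr0.le hnum (by positivity) hden
      _ ≤ (ε * ‖z0‖^2/4) / (‖z0‖ * (‖z0‖/2)) :=
          div_le_div₀ (by positivity) hrr3 (by positivity) le_rfl
      _ = ε/2 := by
          rw [div_eq_iff (by positivity : (0:ℝ) < ‖z0‖ * (‖z0‖/2)).ne']
          ring
      _ < ε := by linarith

lemma backward_extract (n : ℕ) (hn : 2 ≤ n) {c : ℂ} (hc : 1 < ‖c‖)
    (hmem : c ∈ closure (Mhat n)) :
    ∃ a : ℕ → ℂ, (∀ k, a k ∈ Dcoef n) ∧ HasSum (fun k => a k / c ^ (k + 1)) (-1) := by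
  have hc' : 1 < ‖c‖ := by exact hc
  have hc0 : c ≠ 0 := by intro h; rw [h, norm_zero] at hc'; linarith
  set B : ℝ := (n : ℝ) - 1 with hBdef
  have hB0 : 0 < B := by
    have : (2 : ℝ) ≤ (n : ℝ) := by exact_mod_cast hn
    simp only [hBdef]; linarith
  obtain ⟨x, hx, hxc⟩ := mem_closure_iff_seq_limit.mp hmem
  choose m hm1 A hA hAz using fun j => (hx j).2
  set b : ℕ → ℕ → ℂ := fun j k => if k < m j then A j k else 0 with hbdef
  have hbD : ∀ j k, b j k ∈ Dcoef n := by
    intro j k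
    simp only [hbdef]
    split
    · exact hA j k ‹_›
    · exact zero_mem_Dcoef (by omega)
  have hpi : IsCompact (Set.pi Set.univ fun _ : ℕ => Dcoef n) :=
    isCompact_univ_pi fun _ => (Dcoef_finite n).isCompact
  have hbmem : ∀ j, b j ∈ Set.pi Set.univ fun _ : ℕ => Dcoef n :=
    fun j k _ => hbD j k
  obtain ⟨bb, hbbmem, φ, hφ, hconv⟩ := hpi.tendsto_subseq hbmem
  have hbbD : ∀ k, bb k ∈ Dcoef n := fun k => hbbmem k (Set.mem_univ k)
  have hptw : ∀ k, Tendsto (fun j => b (φ j) k) atTop (𝓝 (bb k)) :=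
    fun k => (tendsto_pi_nhds.mp hconv) k
  have hxφ : Tendsto (fun j => x (φ j)) atTop (𝓝 c) := hxc.comp hφ.tendsto_atTop
  set ρ : ℝ := (1 + ‖c‖)/2 with hρdef
  have hρ1 : 1 < ρ := by rw [hρdef]; linarith
  have hρ0 : 0 < ρ := by linarith
  have hρc : ρ < ‖c‖ := by rw [hρdef]; linarith
  have hev : ∀ᶠ j in atTop, ρ ≤ ‖x (φ j)‖ :=
    (hxφ.norm).eventually (eventually_ge_nhds hρc)
  obtain ⟨J, hJ⟩ := Filter.eventually_atTop.mp hev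
  set ψ : ℕ → ℕ := fun j => φ (j + J) with hψdef
  have hρψ : ∀ j, ρ ≤ ‖x (ψ j)‖ := fun j => hJ (j + J) (Nat.le_add_left _ _)
  set g : ℕ → ℕ → ℂ := fun j k => b (ψ j) k / (x (ψ j)) ^ (k + 1) with hgdef
  set G : ℕ → ℂ := fun k => bb k / c ^ (k + 1) with hGdef
  have hρinv : ρ⁻¹ < 1 := inv_lt_one_of_one_lt₀ hρ1
  have hbound_sum : Summable (fun k : ℕ => B * (ρ⁻¹) ^ (k + 1)) := by
    apply Summable.congr (((summable_geometric_of_lt_one (by positivity) hρinv).mul_left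
      (B * ρ⁻¹)))
    intro k; rw [pow_succ]; ring
  have h_bound : ∀ j k, ‖g j k‖ ≤ B * (ρ⁻¹) ^ (k + 1) := by
    intro j k
    have h1 : ‖b (ψ j) k‖ ≤ B := Dcoef_norm (hbD _ _)
    have h2 : ρ ^ (k + 1) ≤ ‖(x (ψ j)) ^ (k + 1)‖ := by
      rw [norm_pow]
      exact pow_le_pow_left₀ hρ0.le (hρψ j) _
    rw [hgdef]
    simp only [norm_div]
    calc ‖b (ψ j) k‖ / ‖x (ψ j) ^ (k + 1)‖ ≤ B / ρ ^ (k + 1) :=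
          div_le_div₀ hB0.le h1 (by positivity) h2
      _ = B * (ρ⁻¹) ^ (k + 1) := by rw [div_eq_mul_inv, inv_pow]
  have h_lim : ∀ k, Tendsto (fun j => g j k) atTop (𝓝 (G k)) := by
    intro k
    have hnum : Tendsto (fun j => b (ψ j) k) atTop (𝓝 (bb k)) :=
      (hptw k).comp (tendsto_add_atTop_nat J)
    have hden : Tendsto (fun j => (x (ψ j)) ^ (k + 1)) atTop (𝓝 (c ^ (k + 1))) :=
      (hxφ.comp (tendsto_add_atTop_nat J)).pow (k + 1)
    exact hnum.div hden (pow_ne_zero _ hc0)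
  have htend := tendsto_tsum_of_dominated_convergence hbound_sum h_lim
    (Filter.Eventually.of_forall h_bound)
  have hconst : (fun j => ∑' k, g j k) = fun _ => (-1 : ℂ) := by
    funext j
    have hfin : (∑' k, g j k) = ∑ k ∈ Finset.range (m (ψ j)), g j k := by
      apply tsum_eq_sum
      intro k hk
      rw [Finset.mem_range, not_lt] at hk
      simp only [hgdef, hbdef]
      rw [if_neg (by omega), zero_div]
    rw [hfin]
    have hcongr : ∑ k ∈ Finset.range (m (ψ j)), g j k
        = ∑ k ∈ Finset.range (m (ψ j)), A (ψ j) k / (x (ψ j)) ^ (k + 1) := by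
      apply Finset.sum_congr rfl
      intro k hk
      simp only [hgdef, hbdef]
      rw [if_pos (Finset.mem_range.mp hk)]
    rw [hcongr]
    linear_combination hAz (ψ j)
  rw [hconst] at htend
  have htsum : (∑' k, G k) = -1 :=
    (tendsto_nhds_unique tendsto_const_nhds htend).symm
  have hGsummable : Summable G := by
    apply Summable.of_norm_bounded (g := fun k : ℕ => B * ((‖c‖⁻¹)) ^ (k + 1))
    · apply Summable.congr (((summable_geometric_of_lt_one (by positivity)
        (inv_lt_one_of_one_lt₀ hc')).mul_left (B * ‖c‖⁻¹)))
      intro k; rw [pow_succ]; ring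
    · intro k
      have h1 : ‖bb k‖ ≤ B := Dcoef_norm (hbbD k)
      simp only [hGdef, norm_div, norm_pow]
      calc ‖bb k‖ / ‖c‖ ^ (k + 1) ≤ B / ‖c‖ ^ (k + 1) :=
            div_le_div₀ hB0.le h1 (by positivity) le_rfl
        _ = B * (‖c‖⁻¹) ^ (k + 1) := by rw [div_eq_mul_inv, inv_pow]
  refine ⟨bb, hbbD, ?_⟩
  have := hGsummable.hasSum
  rwa [htsum] at this


theorem M_eq_closure_Mhat (n : ℕ) (hn : 2 ≤ n) :
    M n = closure (Mhat n) ∩ {c : ℂ | 1 < ‖c‖} := by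
  ext c
  constructor
  · rintro ⟨hc, a, ha, hsum⟩
    refine ⟨Metric.mem_closure_iff.mpr ?_, hc⟩
    intro ε hε
    obtain ⟨c', hc', hd⟩ := forward_approx n hn hc ha hsum ε hε
    exact ⟨c', hc', hd⟩
  · rintro ⟨hcl, hc⟩
    exact ⟨hc, backward_extract n hn hc hcl⟩
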